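/- Fix positive integers ℓ and w, a primitive ℓ-th root of unity ζ ∈ ℂ, and for 1 ≤ i ≤ ℓ let ψ_i : ℤ/ℓℤ → ℂ be the linear character ψ_i(a) = ζ^{(i-1)a}. Let G = (ℤ/ℓℤ)^w ⋊ S_w, where S_w acts by permuting coordinates. Let m_1, …, m_ℓ be nonnegative integers with m_1 + ⋯ + m_ℓ = w, partition {1, …, w} into consecutive blocks B_1, …, B_ℓ with |B_i| = m_i, let Y = S_{B_1} × ⋯ × S_{B_ℓ} be the corresponding Young subgroup of S_w, and let H = (ℤ/ℓℤ)^w ⋊ Y ≤ G. For each i let ρ_i be an irreducible complex character of S_{B_i}, and define the class function f on H by f(h, (x_1,…,x_ℓ)) = (∏_{i=1}^{ℓ} ∏_{j ∈ B_i} ψ_i(h_j)) · ∏_{i=1}^{ℓ} ρ_i(x_i) for h ∈ (ℤ/ℓℤ)^w and x_i ∈ S_{B_i}. Then for every σ ∈ S_w, the induced class function satisfies (Ind_H^G f)((1, σ)) = (Ind_Y^{S_w}(ρ_1 ⊠ ⋯ ⊠ ρ_ℓ))(σ). -/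

import Mathlib

open scoped Classical

/-- `f : G → ℂ` is an irreducible complex character of `G`. -/
def IsIrrChar (G : Type) [Group G] (f : G → ℂ) : Prop :=
  ∃ V : FDRep ℂ G, CategoryTheory.Simple V ∧ FDRep.character V = f

/-- Induction of a class function along a group homomorphism (for the inclusion of a subgroup
this is the usual induced class function). -/
noncomputable def indHom {H G : Type*} [Group H] [Fintype H] [Group G] [Fintype G]
    (φ : H →* G) (u : H → ℂ) : G → ℂ :=
  fun g => (Nat.card H : ℂ)⁻¹ *
    ∑ x : G, ∑ h : H, if φ h = x⁻¹ * g * x then u h else 0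

/-- The action of `Equiv.Perm α` on `α → M` permuting the coordinates. -/
def permAut (M : Type*) [CommGroup M] (α : Type*) : Equiv.Perm α →* MulAut (α → M) where
  toFun σ :=
    { toFun := fun f => f ∘ σ.symm
      invFun := fun f => f ∘ σ
      left_inv := fun f => by ext x; simp
      right_inv := fun f => by ext x; simp
      map_mul' := fun f g => rfl }
  map_one' := rfl
  map_mul' := fun σ τ => rfl

instance fintypeSemidirectProduct {N G : Type*} [Group N] [Group G] {φ : G →* MulAut N}
    [Fintype N] [Fintype G] : Fintype (N ⋊[φ] G) :=
  Fintype.ofEquiv (N × G)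
    ⟨fun p => ⟨p.1, p.2⟩, fun g => (g.left, g.right), fun _ => rfl, fun _ => rfl⟩
/-- The Young subgroup of `Equiv.Perm (Fin w)` attached to the block function `blk`:
permutations preserving each block `B_i = blk⁻¹(i)`. -/
def youngSubgroup {w k : ℕ} (blk : Fin w → Fin k) : Subgroup (Equiv.Perm (Fin w)) where
  carrier := {σ | ∀ j, blk (σ j) = blk j}
  one_mem' := fun _ => rfl
  mul_mem' := by
    intro a b ha hb j
    rw [Equiv.Perm.mul_apply, ha (b j), hb j]
  inv_mem' := by
    intro a ha j
    rw [← ha (a⁻¹ j), ← Equiv.Perm.mul_apply, mul_inv_cancel, Equiv.Perm.one_apply]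

/-- The permutation of the block `B_i` induced by an element of the Young subgroup. -/
def blockPerm {w k : ℕ} {blk : Fin w → Fin k} (σ : youngSubgroup blk) (i : Fin k) :
    Equiv.Perm {j : Fin w // blk j = i} :=
  Equiv.Perm.subtypePerm (σ : Equiv.Perm (Fin w)) (fun x => by rw [σ.2 x])
/-- The wreath product `ℤ/ℓℤ ≀ S_w = (ℤ/ℓℤ)^w ⋊ S_w`, with `S_w` permuting coordinates. -/
abbrev WreathProduct (ℓ w : ℕ) : Type :=
  (Fin w → Multiplicative (ZMod ℓ)) ⋊[permAut (Multiplicative (ZMod ℓ)) (Fin w)]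
    Equiv.Perm (Fin w)

/-- The subgroup `(ℤ/ℓℤ)^w ⋊ Y` of the wreath product, where `Y` is the Young subgroup
of `S_w` attached to the block function `blk`. -/
def bigYoung (ℓ : ℕ) {w k : ℕ} (blk : Fin w → Fin k) : Subgroup (WreathProduct ℓ w) where
  carrier := {g | ∀ j, blk (g.right j) = blk j}
  one_mem' := fun _ => rfl
  mul_mem' := by
    intro a b ha hb j
    rw [SemidirectProduct.mul_right, Equiv.Perm.mul_apply, ha (b.right j), hb j]
  inv_mem' := by
    intro a ha j
    rw [SemidirectProduct.inv_right, ← ha (a.right⁻¹ j), ← Equiv.Perm.mul_apply, mul_inv_cancel, Equiv.Perm.one_apply]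

/-- The permutation of the block `B_i` induced by an element of `bigYoung ℓ blk`. -/
def bigBlockPerm {ℓ w k : ℕ} {blk : Fin w → Fin k} (g : bigYoung ℓ blk) (i : Fin k) :
    Equiv.Perm {j : Fin w // blk j = i} :=
  Equiv.Perm.subtypePerm (g : WreathProduct ℓ w).right (fun x => by rw [g.2 x])

lemma indHom_subtype {G : Type*} [Group G] [Fintype G] (H : Subgroup G)
    (u : H → ℂ) (g : G) :
    indHom H.subtype u g =
      (Nat.card H : ℂ)⁻¹ * ∑ x : G, if hx : x⁻¹ * g * x ∈ H then u ⟨_, hx⟩ else 0 := by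
  unfold indHom
  congr 1
  apply Finset.sum_congr rfl
  intro x _
  split_ifs with hc
  · rw [Finset.sum_eq_single (⟨_, hc⟩ : H)]
    · simp
    · intro b _ hb; rw [if_neg]; exact fun h => hb (Subtype.ext h)
    · simp
  · apply Finset.sum_eq_zero; intro b _; rw [if_neg]
    exact fun h => hc (h ▸ b.2)

lemma zeta_pow_eq_one_of_cast {ℓ : ℕ} [NeZero ℓ] {ζ : ℂ} (hζ : ζ ^ ℓ = 1)
    (S : ℕ) (h : (S : ZMod ℓ) = 0) : ζ ^ S = 1 := by
  obtain ⟨k, rfl⟩ := (ZMod.natCast_eq_zero_iff S ℓ).mp h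
  rw [pow_mul, hζ, one_pow]

/-- let `G = (ℤ/ℓℤ)^w ⋊ S_w`, let `Y` be the Young subgroup of `S_w` given by
consecutive blocks `B_1, …, B_ℓ` of sizes `m_1, …, m_ℓ`, and let `H = (ℤ/ℓℤ)^w ⋊ Y ≤ G`.
Let `ψ_i(a) = ζ^{(i-1)a}` for a primitive `ℓ`-th root of unity `ζ`, let `ρ_i` be an
irreducible character of the symmetric group on `B_i`, and let
`f(h, (x_1, …, x_ℓ)) = (∏_i ∏_{j ∈ B_i} ψ_i(h_j)) · ∏_i ρ_i(x_i)` on `H`. Then for every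
`σ ∈ S_w`, `(Ind_H^G f)(1, σ) = (Ind_Y^{S_w}(ρ_1 ⊠ ⋯ ⊠ ρ_ℓ))(σ)`. -/
theorem wreath_induction_on_pure_permutations
    (ℓ w : ℕ) [NeZero ℓ] (hw : 0 < w)
    (ζ : ℂ) (hζ : IsPrimitiveRoot ζ ℓ)
    (ψ : Fin ℓ → ZMod ℓ → ℂ) (hψ : ∀ i a, ψ i a = ζ ^ ((i : ℕ) * a.val))
    (m : Fin ℓ → ℕ) (hm : ∑ i, m i = w)
    (blk : Fin w → Fin ℓ) (hmono : Monotone blk)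
    (hcard : ∀ i, (Finset.univ.filter fun j => blk j = i).card = m i)
    (ρ : (i : Fin ℓ) → Equiv.Perm {j : Fin w // blk j = i} → ℂ)
    (hρ : ∀ i, IsIrrChar (Equiv.Perm {j : Fin w // blk j = i}) (ρ i))
    (f : bigYoung ℓ blk → ℂ)
    (hf : ∀ g : bigYoung ℓ blk,
      f g = (∏ i : Fin ℓ, ∏ j : {j : Fin w // blk j = i},
               ψ i (Multiplicative.toAdd ((g : WreathProduct ℓ w).left (j : Fin w)))) *
            ∏ i : Fin ℓ, ρ i (bigBlockPerm g i)) :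
    ∀ σ : Equiv.Perm (Fin w),
      indHom (bigYoung ℓ blk).subtype f
          (⟨1, σ⟩ : WreathProduct ℓ w) =
        indHom (youngSubgroup blk).subtype
          (fun τ : youngSubgroup blk => ∏ i : Fin ℓ, ρ i (blockPerm τ i)) σ := by
  intro σ
  have hζ1 : ζ ^ ℓ = 1 := hζ.pow_eq_one
  set N := Fin w → Multiplicative (ZMod ℓ) with hN
  let esd : N × Equiv.Perm (Fin w) ≃ WreathProduct ℓ w :=
    ⟨fun p => ⟨p.1, p.2⟩, fun g => (g.left, g.right), fun _ => rfl, fun _ => rfl⟩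
  let eH : bigYoung ℓ blk ≃ N × youngSubgroup blk :=
    { toFun := fun g => ((g : WreathProduct ℓ w).left, ⟨(g : WreathProduct ℓ w).right, g.2⟩)
      invFun := fun p => ⟨⟨p.1, p.2⟩, p.2.2⟩
      left_inv := fun g => rfl
      right_inv := fun p => rfl }
  have hcardH : Nat.card (bigYoung ℓ blk) =
      Fintype.card N * Nat.card (youngSubgroup blk) := by
    rw [Nat.card_congr eH, Nat.card_prod, Nat.card_eq_fintype_card]
  -- the key pointwise computation
  have key : ∀ (ν : N) (τ : Equiv.Perm (Fin w)),
      (if hx : (esd (ν, τ))⁻¹ * (⟨1, σ⟩ : WreathProduct ℓ w) * esd (ν, τ) ∈ bigYoung ℓ blk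
        then f ⟨_, hx⟩ else 0) =
      (if hx : τ⁻¹ * σ * τ ∈ youngSubgroup blk
        then ∏ i : Fin ℓ, ρ i (blockPerm ⟨_, hx⟩ i) else 0) := by
    intro ν τ
    have hmem : ((esd (ν, τ))⁻¹ * (⟨1, σ⟩ : WreathProduct ℓ w) * esd (ν, τ) ∈ bigYoung ℓ blk)
        ↔ (τ⁻¹ * σ * τ ∈ youngSubgroup blk) := Iff.rfl
    by_cases h1 : (esd (ν, τ))⁻¹ * (⟨1, σ⟩ : WreathProduct ℓ w) * esd (ν, τ) ∈ bigYoung ℓ blk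
    case neg =>
      rw [dif_neg h1, dif_neg (fun h => h1 (hmem.mpr h))]
    case pos =>
      have h2 : τ⁻¹ * σ * τ ∈ youngSubgroup blk := hmem.mp h1
      rw [dif_pos h1, dif_pos h2]
      -- both conditions hold
      set c := (esd (ν, τ))⁻¹ * (⟨1, σ⟩ : WreathProduct ℓ w) * esd (ν, τ) with hc
      have hL : ∀ j, Multiplicative.toAdd (c.left j) =
          Multiplicative.toAdd (ν (σ⁻¹ (τ j))) - Multiplicative.toAdd (ν (τ j)) := by
        intro j
        have e1 : (τ⁻¹ : Equiv.Perm (Fin w)).symm = τ := by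
          rw [Equiv.Perm.inv_def, Equiv.symm_symm]
        have e2 : ((τ⁻¹ * σ : Equiv.Perm (Fin w))).symm = σ⁻¹ * τ := by
          rw [← Equiv.Perm.inv_def, mul_inv_rev, inv_inv]
        have hp1 : ∀ (π : Equiv.Perm (Fin w)) (g : Fin w → Multiplicative (ZMod ℓ)),
            permAut (Multiplicative (ZMod ℓ)) (Fin w) π g = g ∘ π.symm := fun _ _ => rfl
        have hp2 : ∀ (π : Equiv.Perm (Fin w)) (g : Fin w → Multiplicative (ZMod ℓ)),
            (permAut (Multiplicative (ZMod ℓ)) (Fin w) π).symm g = g ∘ π := fun _ _ => rfl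
        show Multiplicative.toAdd ((((⟨ν, τ⟩ : WreathProduct ℓ w))⁻¹ * (⟨1, σ⟩ : WreathProduct ℓ w) * ⟨ν, τ⟩).left j) = _
        simp [SemidirectProduct.mul_left, SemidirectProduct.inv_left, hp1, hp2, e1, e2,
          Equiv.Perm.mul_apply, sub_eq_neg_add, -SemidirectProduct.mk_eq_inl_mul_inr]
      have hchar : (∏ i : Fin ℓ, ∏ j : {j : Fin w // blk j = i},
          ψ i (Multiplicative.toAdd (c.left (j : Fin w)))) = 1 := by
        have step1 : (∏ i : Fin ℓ, ∏ j : {j : Fin w // blk j = i},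
            ψ i (Multiplicative.toAdd (c.left (j : Fin w)))) =
            ∏ j : Fin w, ζ ^ ((blk j : ℕ) * (Multiplicative.toAdd (c.left j)).val) := by
          rw [← Finset.prod_fiberwise Finset.univ blk
            (fun j => ζ ^ ((blk j : ℕ) * (Multiplicative.toAdd (c.left j)).val))]
          apply Finset.prod_congr rfl
          intro i _
          rw [Finset.prod_subtype (p := fun j => blk j = i)
            (Finset.filter (fun j => blk j = i) Finset.univ)
            (by simp) (fun j => ζ ^ ((blk j : ℕ) * (Multiplicative.toAdd (c.left j)).val))]
          apply Finset.prod_congr rfl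
          intro j _
          rw [hψ, j.2]
        rw [step1, Finset.prod_pow_eq_pow_sum]
        apply zeta_pow_eq_one_of_cast hζ1
        push_cast
        simp only [ZMod.natCast_val, ZMod.cast_id]
        have hswap : ∑ j : Fin w, ((blk j : ℕ) : ZMod ℓ) *
            Multiplicative.toAdd (ν (σ⁻¹ (τ j))) =
            ∑ j : Fin w, ((blk j : ℕ) : ZMod ℓ) * Multiplicative.toAdd (ν (τ j)) := by
          refine (Equiv.sum_comp (τ⁻¹ * σ * τ : Equiv.Perm (Fin w))
            (fun j => ((blk j : ℕ) : ZMod ℓ) * Multiplicative.toAdd (ν (σ⁻¹ (τ j))))).symm.trans ?_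
          apply Finset.sum_congr rfl
          intro j _
          have hb : blk ((τ⁻¹ * σ * τ) j) = blk j := h1 j
          have ht : σ⁻¹ (τ ((τ⁻¹ * σ * τ) j)) = τ j := by
            simp [Equiv.Perm.mul_apply]
          rw [hb, ht]
        simp only [hL, mul_sub]
        rw [Finset.sum_sub_distrib, hswap, sub_self]
      rw [hf]
      have hρ2 : (∏ i : Fin ℓ, ρ i (bigBlockPerm (⟨c, h1⟩ : bigYoung ℓ blk) i)) =
          ∏ i : Fin ℓ, ρ i (blockPerm (⟨τ⁻¹ * σ * τ, h2⟩ : youngSubgroup blk) i) := rfl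
      rw [hρ2]
      rw [show (∏ i : Fin ℓ, ∏ j : {j : Fin w // blk j = i},
          ψ i (Multiplicative.toAdd (((⟨c, h1⟩ : bigYoung ℓ blk) : WreathProduct ℓ w).left (j : Fin w)))) = 1 from hchar]
      rw [one_mul]
  rw [indHom_subtype, indHom_subtype]
  rw [← Equiv.sum_comp esd (fun x => if hx : x⁻¹ * (⟨1, σ⟩ : WreathProduct ℓ w) * x ∈ bigYoung ℓ blk
        then f ⟨_, hx⟩ else 0)]
  rw [Fintype.sum_prod_type]
  simp only [key]
  rw [Finset.sum_const, Finset.card_univ, nsmul_eq_mul, hcardH]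
  have hNne : (Fintype.card N : ℂ) ≠ 0 := Nat.cast_ne_zero.mpr Fintype.card_ne_zero
  push_cast
  rw [mul_inv, mul_comm ((Fintype.card N : ℂ))⁻¹, mul_assoc, ← mul_assoc ((Fintype.card N : ℂ))⁻¹,
    inv_mul_cancel₀ hNne, one_mul]
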